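/- Let f : ℝ → (0,∞) be a symmetric function (f(−y) = f(y)) which is strictly positive and decreasing on (0,∞) and satisfies ∫_{|y|>ε} f(y) dy < ∞ for every ε > 0 (i.e., the measure ν(dy) = f(y)dy is unimodal). Define ν(a,∞) := ∫_a^∞ f(u) du. If ∫_1^∞ dy/(y³ f(y)) < ∞, then ∫_1^∞ ( ∫_0^y z · ν(max{1,z}, ∞) dz )^{−1} dy < ∞; more precisely, there is a constant D > 0 (depending on f) such that ∫_1^∞ ( ∫_0^y z · ν(max{1,z}, ∞) dz )^{−1} dy ≤ D ∫_1^∞ dy/(y³ f(y)). -/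

import Mathlib

open MeasureTheory

/-- if `ν(dy) = f(y)dy` is unimodal (symmetric density, strictly
positive and decreasing on `(0,∞)`, integrable away from the origin) and
`∫_1^∞ dy/(y³ f(y)) < ∞`, then the recurrence-condition integral
`∫_1^∞ (∫_0^y z ν(max{1,z},∞) dz)⁻¹ dy` is finite; more precisely it is bounded
by `D ∫_1^∞ dy/(y³ f(y))` for some constant `D > 0`. -/
theorem unimodal_transience_condition_comparison
    (f : ℝ → ℝ) (hf_meas : Measurable f)
    (hf_symm : ∀ y : ℝ, f (-y) = f y)
    (hf_pos : ∀ y : ℝ, 0 < y → 0 < f y)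
    (hf_anti : AntitoneOn f (Set.Ioi (0 : ℝ)))
    (hf_int : ∀ ε : ℝ, 0 < ε → IntegrableOn f {y : ℝ | ε < |y|})
    (hI : IntegrableOn (fun y => 1 / (y ^ 3 * f y)) (Set.Ici (1 : ℝ))) :
    IntegrableOn
        (fun y => (∫ z in (0 : ℝ)..y, z * ∫ u in Set.Ioi (max 1 z), f u)⁻¹)
        (Set.Ici (1 : ℝ)) ∧
    ∃ D : ℝ, 0 < D ∧
      ∫ y in Set.Ici (1 : ℝ),
          (∫ z in (0 : ℝ)..y, z * ∫ u in Set.Ioi (max 1 z), f u)⁻¹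
        ≤ D * ∫ y in Set.Ici (1 : ℝ), 1 / (y ^ 3 * f y) := by
  -- integrability of f on Ioi a for a ≥ 1
  have hfInt : ∀ a : ℝ, 1 ≤ a → IntegrableOn f (Set.Ioi a) := by
    intro a ha
    refine (hf_int (1/2) (by norm_num)).mono_set fun y hy => ?_
    have h1y : (1:ℝ) ≤ y := le_trans ha (le_of_lt hy)
    simp only [Set.mem_setOf_eq]
    rw [abs_of_pos (by linarith)]
    linarith
  have hf1pos : 0 < f 1 := hf_pos 1 one_pos
  set N : ℝ → ℝ := fun a => ∫ u in Set.Ioi (max 1 a), f u with hNdef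
  have hNanti : Antitone N := by
    intro a b hab
    refine setIntegral_mono_set (hfInt _ (le_max_left _ _)) ?_ ?_
    · filter_upwards [ae_restrict_mem measurableSet_Ioi] with u hu
      exact (hf_pos u (lt_of_lt_of_le one_pos
        (le_trans (le_max_left 1 a) (le_of_lt hu)))).le
    · exact HasSubset.Subset.eventuallyLE (Set.Ioi_subset_Ioi (max_le_max le_rfl hab))
  have hNnonneg : ∀ a, 0 ≤ N a := by
    intro a
    refine setIntegral_nonneg measurableSet_Ioi fun u hu => ?_
    exact (hf_pos u (lt_of_lt_of_le one_pos
      (le_trans (le_max_left 1 a) (le_of_lt hu)))).le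
  -- positivity of N 1
  have hN1pos : 0 < N 1 := by
    have h1 : (∫ u in Set.Ioc (1:ℝ) 2, f 2) ≤ ∫ u in Set.Ioc (1:ℝ) 2, f u := by
      refine setIntegral_mono_on
        (integrableOn_const measure_Ioc_lt_top.ne enorm_ne_top)
        ((hfInt 1 le_rfl).mono_set Set.Ioc_subset_Ioi_self)
        measurableSet_Ioc fun x hx => ?_
      exact hf_anti (Set.mem_Ioi.2 (lt_trans one_pos hx.1))
        (Set.mem_Ioi.2 (by norm_num)) hx.2
    have h2 : (∫ u in Set.Ioc (1:ℝ) 2, f u) ≤ ∫ u in Set.Ioi (1:ℝ), f u := by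
      refine setIntegral_mono_set (hfInt 1 le_rfl) ?_
        (HasSubset.Subset.eventuallyLE Set.Ioc_subset_Ioi_self)
      filter_upwards [ae_restrict_mem measurableSet_Ioi] with u hu
      exact (hf_pos u (lt_trans one_pos hu)).le
    have h3 : (∫ u in Set.Ioc (1:ℝ) 2, f 2) = f 2 := by
      rw [setIntegral_const]
      simp [Real.volume_Ioc]
      norm_num
    have : N 1 = ∫ u in Set.Ioi (1:ℝ), f u := by rw [hNdef]; simp
    rw [this]
    calc (0:ℝ) < f 2 := hf_pos 2 two_pos
    _ = ∫ u in Set.Ioc (1:ℝ) 2, f 2 := h3.symm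
    _ ≤ ∫ u in Set.Ioc (1:ℝ) 2, f u := h1
    _ ≤ _ := h2
  set c : ℝ := N 1 with hcdef
  -- the inner integrand
  set h : ℝ → ℝ := fun z => z * N z with hhdef
  have hh_meas : Measurable h := measurable_id.mul hNanti.measurable
  have hh_nonneg : ∀ z, 0 ≤ z → 0 ≤ h z := fun z hz => mul_nonneg hz (hNnonneg z)
  have hh_int : ∀ y : ℝ, IntegrableOn h (Set.Ioc 0 y) := by
    intro y
    refine Integrable.mono' (g := fun _ => y * N 0)
      (integrableOn_const measure_Ioc_lt_top.ne enorm_ne_top)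
      hh_meas.aestronglyMeasurable ?_
    filter_upwards [ae_restrict_mem measurableSet_Ioc] with z hz
    rw [Real.norm_eq_abs, abs_of_nonneg (hh_nonneg z hz.1.le)]
    exact mul_le_mul hz.2 (hNanti hz.1.le) (hNnonneg z) (le_trans hz.1.le hz.2)
  -- monotone extension g
  set g : ℝ → ℝ := fun y => ∫ z in Set.Ioc 0 (max 1 y), h z with hgdef
  have hg_mono : Monotone g := by
    intro a b hab
    refine setIntegral_mono_set (hh_int _) ?_
      (HasSubset.Subset.eventuallyLE (Set.Ioc_subset_Ioc_right (max_le_max le_rfl hab)))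
    filter_upwards [ae_restrict_mem measurableSet_Ioc] with z hz
    exact hh_nonneg z hz.1.le
  have hg_eqG : ∀ y : ℝ, 1 ≤ y →
      (∫ z in (0:ℝ)..y, z * ∫ u in Set.Ioi (max 1 z), f u) = g y := by
    intro y hy
    rw [intervalIntegral.integral_of_le (le_trans zero_le_one hy), hgdef]
    simp [max_eq_right hy]
    rfl
  -- lower bound: g y ≥ c / 4 for y ≥ 1
  have hg_lb1 : ∀ y : ℝ, 1 ≤ y → c / 4 ≤ g y := by
    intro y hy
    have hsub : Set.Ioc (1/2 : ℝ) 1 ⊆ Set.Ioc 0 (max 1 y) :=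
      Set.Ioc_subset_Ioc (by norm_num) (le_max_left _ _)
    have h1 : (∫ _z in Set.Ioc (1/2:ℝ) 1, (1/2 : ℝ) * c) ≤ ∫ z in Set.Ioc (1/2:ℝ) 1, h z := by
      refine setIntegral_mono_on
        (integrableOn_const measure_Ioc_lt_top.ne enorm_ne_top)
        ((hh_int 1).mono_set (Set.Ioc_subset_Ioc_left (by norm_num)))
        measurableSet_Ioc fun z hz => ?_
      have hNz : c ≤ N z := hNanti hz.2
      calc (1/2 : ℝ) * c ≤ z * c := mul_le_mul_of_nonneg_right hz.1.le hN1pos.le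
      _ ≤ z * N z := mul_le_mul_of_nonneg_left hNz (by linarith [hz.1])
    have h2 : (∫ z in Set.Ioc (1/2:ℝ) 1, h z) ≤ g y := by
      refine setIntegral_mono_set (hh_int _) ?_ (HasSubset.Subset.eventuallyLE hsub)
      filter_upwards [ae_restrict_mem measurableSet_Ioc] with z hz
      exact hh_nonneg z hz.1.le
    have h3 : (∫ _z in Set.Ioc (1/2:ℝ) 1, (1/2 : ℝ) * c) = c / 4 := by
      rw [setIntegral_const]
      simp [Real.volume_Ioc]
      rw [max_eq_left (by norm_num : (0:ℝ) ≤ 1 - 2⁻¹)]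
      ring
    linarith
  -- lower bound for y ≥ 4 : g y ≥ y^3 * f y / 32
  have hg_lb2 : ∀ y : ℝ, 4 ≤ y → y ^ 3 * f y / 32 ≤ g y := by
    intro y hy
    have hy0 : (0:ℝ) < y := by linarith
    have hfy : 0 < f y := hf_pos y hy0
    have hsub : Set.Ioc (y/4) (y/2) ⊆ Set.Ioc 0 (max 1 y) :=
      Set.Ioc_subset_Ioc (by linarith) (le_trans (by linarith) (le_max_right 1 y))
    -- pointwise bound on Ioc (y/4) (y/2)
    have hpt : ∀ z ∈ Set.Ioc (y/4) (y/2), (y/4) * ((y/2) * f y) ≤ h z := by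
      intro z hz
      have hz1 : (1:ℝ) ≤ z := le_trans (by linarith) hz.1.le
      have hzpos : (0:ℝ) < z := lt_of_lt_of_le one_pos hz1
      -- N z ≥ (y/2) * f y
      have hNz : (y/2) * f y ≤ N z := by
        have hmax : max (1:ℝ) z = z := max_eq_right hz1
        have hNz_eq : N z = ∫ u in Set.Ioi z, f u := by rw [hNdef]; simp [hmax]
        have hA : (∫ _u in Set.Ioc z y, f y) ≤ ∫ u in Set.Ioc z y, f u := by
          refine setIntegral_mono_on
            (integrableOn_const measure_Ioc_lt_top.ne enorm_ne_top)
            ((hfInt z hz1).mono_set Set.Ioc_subset_Ioi_self)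
            measurableSet_Ioc fun u hu => ?_
          exact hf_anti (Set.mem_Ioi.2 (lt_trans hzpos hu.1)) (Set.mem_Ioi.2 hy0) hu.2
        have hB : (∫ u in Set.Ioc z y, f u) ≤ ∫ u in Set.Ioi z, f u := by
          refine setIntegral_mono_set (hfInt z hz1) ?_
            (HasSubset.Subset.eventuallyLE Set.Ioc_subset_Ioi_self)
          filter_upwards [ae_restrict_mem measurableSet_Ioi] with u hu
          exact (hf_pos u (lt_trans hzpos hu)).le
        have hC : (∫ _u in Set.Ioc z y, f y) = (y - z) * f y := by
          rw [setIntegral_const]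
          have hzy : z ≤ y := le_trans hz.2 (by linarith)
          simp [Real.volume_Ioc, ENNReal.toReal_ofReal (by linarith : (0:ℝ) ≤ y - z), hzy]
        have hyz : (y/2) * f y ≤ (y - z) * f y := by
          have : y/2 ≤ y - z := by linarith [hz.2]
          exact mul_le_mul_of_nonneg_right this hfy.le
        rw [hNz_eq]; linarith
      calc (y/4) * ((y/2) * f y) ≤ z * ((y/2) * f y) := by
            apply mul_le_mul_of_nonneg_right hz.1.le
            positivity
      _ ≤ z * N z := mul_le_mul_of_nonneg_left hNz hzpos.le
    have h1 : (∫ _z in Set.Ioc (y/4) (y/2), (y/4) * ((y/2) * f y)) ≤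
        ∫ z in Set.Ioc (y/4) (y/2), h z := by
      refine setIntegral_mono_on
        (integrableOn_const measure_Ioc_lt_top.ne enorm_ne_top)
        ((hh_int (y/2)).mono_set (Set.Ioc_subset_Ioc_left (by linarith)))
        measurableSet_Ioc hpt
    have h2 : (∫ z in Set.Ioc (y/4) (y/2), h z) ≤ g y := by
      refine setIntegral_mono_set (hh_int _) ?_ (HasSubset.Subset.eventuallyLE hsub)
      filter_upwards [ae_restrict_mem measurableSet_Ioc] with z hz
      exact hh_nonneg z hz.1.le
    have h3 : (∫ _z in Set.Ioc (y/4) (y/2), (y/4) * ((y/2) * f y)) = y ^ 3 * f y / 32 := by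
      rw [setIntegral_const]
      have : (y/2 : ℝ) - y/4 = y/4 := by ring
      have hm : max (y/4) 0 = y/4 := max_eq_left (by linarith)
      simp [Real.volume_Ioc, this, ENNReal.toReal_ofReal (by linarith : (0:ℝ) ≤ y/4), hm]
      ring
    linarith
  -- positivity of g on Ici 1
  have hg_pos : ∀ y : ℝ, 1 ≤ y → 0 < g y := fun y hy =>
    lt_of_lt_of_le (by positivity) (hg_lb1 y hy)
  -- the constant
  set D : ℝ := max 32 (256 * f 1 / c) with hDdef
  have hDpos : (0:ℝ) < D := lt_of_lt_of_le (by norm_num) (le_max_left _ _)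
  -- pointwise comparison on Ici 1
  have hkey : ∀ y : ℝ, 1 ≤ y → (g y)⁻¹ ≤ D * (1 / (y ^ 3 * f y)) := by
    intro y hy
    have hy0 : (0:ℝ) < y := lt_of_lt_of_le one_pos hy
    have hfy : 0 < f y := hf_pos y hy0
    have hden : (0:ℝ) < y ^ 3 * f y := by positivity
    rcases le_or_gt 4 y with h4 | h4
    · -- y ≥ 4
      have hlb := hg_lb2 y h4
      have hlbpos : (0:ℝ) < y ^ 3 * f y / 32 := by positivity
      have : (g y)⁻¹ ≤ (y ^ 3 * f y / 32)⁻¹ :=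
        inv_anti₀ hlbpos hlb
      calc (g y)⁻¹ ≤ (y ^ 3 * f y / 32)⁻¹ := this
      _ = 32 * (1 / (y ^ 3 * f y)) := by field_simp
      _ ≤ D * (1 / (y ^ 3 * f y)) := by
          apply mul_le_mul_of_nonneg_right (le_max_left _ _)
          positivity
    · -- 1 ≤ y < 4
      have hlb := hg_lb1 y hy
      have hc4 : (0:ℝ) < c / 4 := by positivity
      have h1 : (g y)⁻¹ ≤ (c / 4)⁻¹ := inv_anti₀ hc4 hlb
      have hfy1 : f y ≤ f 1 := by
        rcases eq_or_lt_of_le hy with heq | hlt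
        · rw [← heq]
        · exact hf_anti (Set.mem_Ioi.2 one_pos) (Set.mem_Ioi.2 hy0) hy
      have hden_ub : y ^ 3 * f y ≤ 64 * f 1 := by
        have hy3 : y ^ 3 ≤ 64 := by
          nlinarith [mul_pos (sub_pos.2 h4) (by positivity : (0:ℝ) < 16 + 4*y + y^2)]
        nlinarith
      have h2 : (1 : ℝ) / (64 * f 1) ≤ 1 / (y ^ 3 * f y) :=
        one_div_le_one_div_of_le hden hden_ub
      have h3 : (c/4 : ℝ)⁻¹ = (256 * f 1 / c) * (1 / (64 * f 1)) := by
        field_simp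
        ring
      calc (g y)⁻¹ ≤ (c/4)⁻¹ := h1
      _ = (256 * f 1 / c) * (1 / (64 * f 1)) := h3
      _ ≤ (256 * f 1 / c) * (1 / (y ^ 3 * f y)) := by
          apply mul_le_mul_of_nonneg_left h2
          positivity
      _ ≤ D * (1 / (y ^ 3 * f y)) := by
          apply mul_le_mul_of_nonneg_right (le_max_right _ _)
          positivity
  -- measurability of the integrand on Ici 1
  have hmeas : AEStronglyMeasurable
      (fun y => (∫ z in (0:ℝ)..y, z * ∫ u in Set.Ioi (max 1 z), f u)⁻¹)
      (volume.restrict (Set.Ici (1:ℝ))) := by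
    refine (hg_mono.measurable.inv.aestronglyMeasurable).congr ?_
    filter_upwards [ae_restrict_mem measurableSet_Ici] with y hy
    rw [hg_eqG y hy]
    rfl
  -- the dominating function
  have hdom : IntegrableOn (fun y => D * (1 / (y ^ 3 * f y))) (Set.Ici (1:ℝ)) :=
    hI.const_mul D
  have hbound : ∀ᵐ y ∂(volume.restrict (Set.Ici (1:ℝ))),
      ‖(∫ z in (0:ℝ)..y, z * ∫ u in Set.Ioi (max 1 z), f u)⁻¹‖ ≤ D * (1 / (y ^ 3 * f y)) := by
    filter_upwards [ae_restrict_mem measurableSet_Ici] with y hy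
    rw [hg_eqG y hy, Real.norm_eq_abs, abs_of_nonneg (inv_nonneg.2 (hg_pos y hy).le)]
    exact hkey y hy
  have hint : IntegrableOn
      (fun y => (∫ z in (0:ℝ)..y, z * ∫ u in Set.Ioi (max 1 z), f u)⁻¹)
      (Set.Ici (1:ℝ)) := Integrable.mono' hdom hmeas hbound
  refine ⟨hint, D, hDpos, ?_⟩
  calc ∫ y in Set.Ici (1:ℝ), (∫ z in (0:ℝ)..y, z * ∫ u in Set.Ioi (max 1 z), f u)⁻¹
      ≤ ∫ y in Set.Ici (1:ℝ), D * (1 / (y ^ 3 * f y)) := by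
        refine setIntegral_mono_on hint hdom measurableSet_Ici fun y hy => ?_
        rw [hg_eqG y hy]
        exact hkey y hy
  _ = D * ∫ y in Set.Ici (1:ℝ), 1 / (y ^ 3 * f y) := by
        rw [integral_const_mul]
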